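/- In the metric product X = H² × ℝ, for points (x,a) and (y,b), the distance satisfies dist((x,a),(y,b)) = sqrt(d_{H²}(x,y)² + (a − b)²), and for a right geodesic triangle in X with right angle at a vertex p, legs of lengths l (contained in H² × {0}) and d (making angle α with the horizontal at p, i.e., with vertical component d sin α), the hypotenuse h satisfies cosh h ≤ cosh l · cosh d, with strict inequality if sin α > 0, d > 0 and l > 0. -/

import Mathlib

open UpperHalfPlane

/-- The inverse of `cosh` on `[1, ∞)`. -/
noncomputable def arcosh (x : ℝ) : ℝ := Real.log (x + Real.sqrt (x ^ 2 - 1))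

lemma aux_sinh_lt_mul_cosh {x : ℝ} (hx : 0 < x) : Real.sinh x < x * Real.cosh x := by
  have key : StrictMonoOn (fun y : ℝ => y * Real.cosh y - Real.sinh y) (Set.Ici 0) := by
    apply strictMonoOn_of_deriv_pos (convex_Ici 0)
    · fun_prop
    · intro y hy
      rw [interior_Ici] at hy
      have h : HasDerivAt (fun y : ℝ => y * Real.cosh y - Real.sinh y) (y * Real.sinh y) y := by
        have := ((hasDerivAt_id y).mul (Real.hasDerivAt_cosh y)).sub (Real.hasDerivAt_sinh y)
        exact this.congr_deriv (by simp only [id]; ring)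
      rw [h.deriv]
      exact mul_pos hy (by rwa [Real.sinh_pos_iff])
  have := key (Set.self_mem_Ici) (Set.mem_Ici.mpr hx.le) hx
  simpa using this
lemma aux_sinh_le_mul_cosh {x : ℝ} (hx : 0 ≤ x) : Real.sinh x ≤ x * Real.cosh x := by
  rcases hx.eq_or_lt with h | h
  · simp [← h]
  · exact (aux_sinh_lt_mul_cosh h).le

lemma aux_hasDerivAt_coshsqrt {x : ℝ} (hx : 0 < x) :
    HasDerivAt (fun y : ℝ => Real.cosh (Real.sqrt y)) (Real.sinh (Real.sqrt x) * (1 / (2 * Real.sqrt x))) x :=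
  (Real.hasDerivAt_sqrt hx.ne').cosh

lemma aux_strictConvexOn_coshsqrt : StrictConvexOn ℝ (Set.Ici 0) (fun x : ℝ => Real.cosh (Real.sqrt x)) := by
  apply strictConvexOn_of_deriv2_pos (convex_Ici 0)
  · fun_prop
  · intro x hx
    rw [interior_Ici] at hx
    have hs : (0:ℝ) < Real.sqrt x := Real.sqrt_pos.mpr hx
    have hd : ∀ y ∈ Set.Ioi (0:ℝ), deriv (fun y : ℝ => Real.cosh (Real.sqrt y)) y
        = Real.sinh (Real.sqrt y) * (1 / (2 * Real.sqrt y)) := fun y hy =>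
      (aux_hasDerivAt_coshsqrt hy).deriv
    have hev : deriv (fun y : ℝ => Real.cosh (Real.sqrt y))
        =ᶠ[nhds x] (fun y => Real.sinh (Real.sqrt y) * (1 / (2 * Real.sqrt y))) := by
      filter_upwards [Ioi_mem_nhds hx] with y hy using hd y hy
    have h2 : HasDerivAt (fun y => Real.sinh (Real.sqrt y) * (1 / (2 * Real.sqrt y)))
        (Real.cosh (Real.sqrt x) * (1 / (2 * Real.sqrt x)) * (1 / (2 * Real.sqrt x))
          + Real.sinh (Real.sqrt x) * (-(2 * (1 / (2 * Real.sqrt x))) / (2 * Real.sqrt x)^2)) x := by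
      have hsq := Real.hasDerivAt_sqrt hx.ne'
      have ha : HasDerivAt (fun y : ℝ => Real.sinh (Real.sqrt y))
          (Real.cosh (Real.sqrt x) * (1 / (2 * Real.sqrt x))) x := hsq.sinh
      have hb : HasDerivAt (fun y : ℝ => (1 / (2 * Real.sqrt y)))
          (-(2 * (1 / (2 * Real.sqrt x))) / (2 * Real.sqrt x)^2) x := by
        have := (hsq.const_mul 2).inv (by positivity)
        rw [show (fun y : ℝ => 1 / (2 * Real.sqrt y)) = (fun y => 2 * Real.sqrt y)⁻¹ by funext y; simp [one_div]]
        exact this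
      exact ha.mul hb
    show 0 < deriv^[2] _ x
    rw [Function.iterate_succ, Function.iterate_one, Function.comp_apply, hev.deriv_eq, h2.deriv]
    have key : Real.sinh (Real.sqrt x) < Real.sqrt x * Real.cosh (Real.sqrt x) :=
      aux_sinh_lt_mul_cosh hs
    set s := Real.sqrt x with hsdef
    have heq : Real.cosh s * (1 / (2 * s)) * (1 / (2 * s))
          + Real.sinh s * (-(2 * (1 / (2 * s))) / (2 * s) ^ 2)
        = (s * Real.cosh s - Real.sinh s) / (4 * s ^ 3) := by
      field_simp
      ring
    rw [heq]
    apply div_pos (by linarith) (by positivity)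

lemma aux_cosh_sqrt_le {a b : ℝ} (ha : 0 ≤ a) (hb : 0 ≤ b) :
    Real.cosh (Real.sqrt (a^2 + b^2)) ≤ Real.cosh a * Real.cosh b := by
  have hcvx := aux_strictConvexOn_coshsqrt.convexOn
  have h := hcvx.2 (Set.mem_Ici.mpr (sq_nonneg (a - b))) (Set.mem_Ici.mpr (sq_nonneg (a + b)))
    (by norm_num : (0:ℝ) ≤ 1/2) (by norm_num : (0:ℝ) ≤ 1/2) (by norm_num)
  have e1 : (1/2 : ℝ) • (a-b)^2 + (1/2 : ℝ) • (a+b)^2 = a^2 + b^2 := by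
    simp [smul_eq_mul]; ring
  rw [e1] at h
  have e2 : Real.sqrt ((a-b)^2) = |a-b| := Real.sqrt_sq_eq_abs _
  have e3 : Real.sqrt ((a+b)^2) = a+b := Real.sqrt_sq (by linarith)
  simp only [smul_eq_mul, e2, e3] at h
  rw [Real.cosh_abs, Real.cosh_sub, Real.cosh_add] at h
  calc Real.cosh (Real.sqrt (a^2+b^2)) ≤ _ := h
    _ = Real.cosh a * Real.cosh b := by ring

lemma aux_cosh_sqrt_lt {a b : ℝ} (ha : 0 < a) (hb : 0 < b) :
    Real.cosh (Real.sqrt (a^2 + b^2)) < Real.cosh a * Real.cosh b := by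
  have hne : (a-b)^2 ≠ (a+b)^2 := by nlinarith
  have h := aux_strictConvexOn_coshsqrt.2 (Set.mem_Ici.mpr (sq_nonneg (a - b)))
    (Set.mem_Ici.mpr (sq_nonneg (a + b))) hne
    (by norm_num : (0:ℝ) < 1/2) (by norm_num : (0:ℝ) < 1/2) (by norm_num)
  have e1 : (1/2 : ℝ) • (a-b)^2 + (1/2 : ℝ) • (a+b)^2 = a^2 + b^2 := by
    simp [smul_eq_mul]; ring
  rw [e1] at h
  have e2 : Real.sqrt ((a-b)^2) = |a-b| := Real.sqrt_sq_eq_abs _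
  have e3 : Real.sqrt ((a+b)^2) = a+b := Real.sqrt_sq (by linarith)
  simp only [smul_eq_mul, e2, e3] at h
  rw [Real.cosh_abs, Real.cosh_sub, Real.cosh_add] at h
  calc Real.cosh (Real.sqrt (a^2+b^2)) < _ := h
    _ = Real.cosh a * Real.cosh b := by ring


lemma aux_arg_pos {x : ℝ} (hx : 1 ≤ x) : 1 ≤ x + Real.sqrt (x^2 - 1) := by
  have := Real.sqrt_nonneg (x^2 - 1); linarith

lemma aux_inv_arg {x : ℝ} (hx : 1 ≤ x) :
    (x + Real.sqrt (x^2 - 1))⁻¹ = x - Real.sqrt (x^2 - 1) := by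
  have h1 : (0:ℝ) ≤ x^2 - 1 := by nlinarith
  have h2 : (x + Real.sqrt (x^2-1)) * (x - Real.sqrt (x^2-1)) = 1 := by
    have := Real.sq_sqrt h1
    nlinarith
  field_simp [show x + Real.sqrt (x^2-1) ≠ 0 by have := aux_arg_pos hx; linarith]
  linarith [h2]

lemma aux_arcosh_nonneg {x : ℝ} (hx : 1 ≤ x) : 0 ≤ arcosh x :=
  Real.log_nonneg (aux_arg_pos hx)

lemma aux_cosh_arcosh {x : ℝ} (hx : 1 ≤ x) : Real.cosh (arcosh x) = x := by
  rw [arcosh, Real.cosh_log (by linarith [aux_arg_pos hx]), aux_inv_arg hx]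
  ring

lemma aux_sinh_arcosh {x : ℝ} (hx : 1 ≤ x) : Real.sinh (arcosh x) = Real.sqrt (x^2 - 1) := by
  rw [arcosh, Real.sinh_log (by linarith [aux_arg_pos hx]), aux_inv_arg hx]
  ring

lemma aux_arcosh_cosh {y : ℝ} (hy : 0 ≤ y) : arcosh (Real.cosh y) = y := by
  have h1 : (1:ℝ) ≤ Real.cosh y := Real.one_le_cosh y
  have h2 : Real.cosh (arcosh (Real.cosh y)) = Real.cosh y := aux_cosh_arcosh h1
  have h3 : |arcosh (Real.cosh y)| = |y| := by
    have hle := Real.cosh_le_cosh.mp h2.le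
    have hge := Real.cosh_le_cosh.mp h2.ge
    exact le_antisymm hle hge
  rwa [abs_of_nonneg (aux_arcosh_nonneg h1), abs_of_nonneg hy] at h3

lemma aux_hasDerivAt_arcosh {x : ℝ} (hx : 1 < x) :
    HasDerivAt arcosh (1 / Real.sqrt (x^2 - 1)) x := by
  have h1 : (0:ℝ) < x^2 - 1 := by nlinarith
  have hs : (0:ℝ) < Real.sqrt (x^2 - 1) := Real.sqrt_pos.mpr h1
  have hsq : HasDerivAt (fun y : ℝ => Real.sqrt (y^2 - 1))
      ((2*x) * (1 / (2 * Real.sqrt (x^2-1)))) x := by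
    have hinner : HasDerivAt (fun y : ℝ => y^2 - 1) (2*x) x := by
      simpa using ((hasDerivAt_pow 2 x).sub_const 1)
    exact (Real.hasDerivAt_sqrt h1.ne').comp x hinner |>.congr_deriv (by ring)
  have harg : HasDerivAt (fun y : ℝ => y + Real.sqrt (y^2 - 1))
      (1 + x / Real.sqrt (x^2-1)) x := by
    have := (hasDerivAt_id x).add hsq
    exact this.congr_deriv (by rw [mul_one_div, mul_div_mul_left _ _ two_ne_zero])
  have hpos : 0 < x + Real.sqrt (x^2 - 1) := by linarith [aux_arg_pos hx.le]
  have hlog := harg.log hpos.ne'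
  have heq : (1 + x / Real.sqrt (x^2-1)) / (x + Real.sqrt (x^2-1)) = 1 / Real.sqrt (x^2-1) := by
    field_simp
    ring
  rw [← heq]
  exact hlog

lemma aux_continuousOn_arcosh : ContinuousOn arcosh (Set.Ici 1) := by
  apply ContinuousOn.log
  · fun_prop
  · intro x hx
    have := aux_arg_pos (Set.mem_Ici.mp hx)
    intro h; rw [h] at this; linarith

set_option maxHeartbeats 1000000 in
lemma aux_key {k y : ℝ} (hk : 1 ≤ k) (hy : 1 < y) :
    arcosh y * Real.sqrt ((k*y)^2 - 1) ≤ arcosh (k*y) * (k * Real.sqrt (y^2 - 1)) ∧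
    (1 < k → arcosh y * Real.sqrt ((k*y)^2 - 1) < arcosh (k*y) * (k * Real.sqrt (y^2 - 1))) := by
  have hky : 1 ≤ k * y := by nlinarith
  set a := arcosh k with hadef
  set b := arcosh y with hbdef
  set A := arcosh (k*y) with hAdef
  clear_value a b A
  have ha0 : 0 ≤ a := by rw [hadef]; exact aux_arcosh_nonneg hk
  have hb0 : 0 ≤ b := by rw [hbdef]; exact aux_arcosh_nonneg hy.le
  have hA0 : 0 ≤ A := by rw [hAdef]; exact aux_arcosh_nonneg hky
  have hka : Real.cosh a = k := by rw [hadef]; exact aux_cosh_arcosh hk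
  have hyb : Real.cosh b = y := by rw [hbdef]; exact aux_cosh_arcosh hy.le
  have hAc : Real.cosh A = k * y := by rw [hAdef]; exact aux_cosh_arcosh hky
  have hb_pos : 0 < b := by
    by_contra hcon
    push_neg at hcon
    have hb00 : b = 0 := le_antisymm hcon hb0
    rw [hb00, Real.cosh_zero] at hyb
    linarith
  have hsb : Real.sinh b = Real.sqrt (y^2 - 1) := by rw [hbdef]; exact aux_sinh_arcosh hy.le
  have hsA : Real.sinh A = Real.sqrt ((k*y)^2 - 1) := by rw [hAdef]; exact aux_sinh_arcosh hky
  have hAge : Real.sqrt (a^2 + b^2) ≤ A := by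
    have h1 : Real.cosh (Real.sqrt (a^2 + b^2)) ≤ Real.cosh a * Real.cosh b :=
      aux_cosh_sqrt_le ha0 hb0
    rw [hka, hyb, ← hAc] at h1
    have := Real.cosh_le_cosh.mp h1
    rwa [abs_of_nonneg (Real.sqrt_nonneg _), abs_of_nonneg hA0] at this
  have hA2 : a^2 + b^2 ≤ A^2 := by
    have := pow_le_pow_left₀ (Real.sqrt_nonneg _) hAge 2
    rwa [Real.sq_sqrt (by positivity)] at this
  have hsA2 : Real.sinh A ^ 2 = Real.cosh a ^2 * Real.sinh b ^2 + Real.sinh a ^2 := by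
    calc Real.sinh A ^ 2 = Real.cosh A ^2 - 1 := by linarith [Real.cosh_sq A]
      _ = (Real.cosh a * Real.cosh b)^2 - 1 := by rw [hAc, hka, hyb]
      _ = Real.cosh a ^2 * Real.sinh b ^2 + Real.sinh a ^2 := by
          rw [mul_pow, Real.cosh_sq a, Real.cosh_sq b]; ring
  have hsb_pos : 0 < Real.sinh b := by rwa [Real.sinh_pos_iff]
  have hsa_le : Real.sinh a ≤ a * Real.cosh a := aux_sinh_le_mul_cosh ha0
  have hb_le : b ≤ Real.sinh b := (Real.self_lt_sinh_iff.mpr hb_pos).le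
  have hsa0 : 0 ≤ Real.sinh a := by rwa [Real.sinh_nonneg_iff]
  have hca : 0 < Real.cosh a := Real.cosh_pos a
  have hc : (0:ℝ) ≤ Real.cosh a ^2 * Real.sinh b ^2 := by positivity
  have hsA0 : 0 ≤ Real.sinh A := by rwa [Real.sinh_nonneg_iff]
  have hsq : (b * Real.sinh A)^2 ≤ (A * (Real.cosh a * Real.sinh b))^2 := by
    have key : (b * Real.sinh a)^2 ≤ a^2 * (Real.cosh a ^2 * Real.sinh b ^2) := by
      have h1 : b * Real.sinh a ≤ a * Real.cosh a * Real.sinh b := by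
        calc b * Real.sinh a ≤ Real.sinh b * Real.sinh a := by nlinarith
          _ ≤ a * Real.cosh a * Real.sinh b := by nlinarith
      calc (b * Real.sinh a)^2 ≤ (a * Real.cosh a * Real.sinh b)^2 := by
            have h0 : 0 ≤ b * Real.sinh a := mul_nonneg hb0 hsa0
            exact pow_le_pow_left₀ h0 h1 2
        _ = a^2 * (Real.cosh a ^2 * Real.sinh b ^2) := by ring
    calc (b * Real.sinh A)^2 = b^2 * (Real.cosh a ^2 * Real.sinh b ^2) + (b * Real.sinh a)^2 := by
          rw [mul_pow, hsA2]; ring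
      _ ≤ b^2 * (Real.cosh a ^2 * Real.sinh b ^2) + a^2 * (Real.cosh a ^2 * Real.sinh b ^2) := by
          linarith
      _ = (a^2 + b^2) * (Real.cosh a ^2 * Real.sinh b ^2) := by ring
      _ ≤ A^2 * (Real.cosh a ^2 * Real.sinh b ^2) := mul_le_mul_of_nonneg_right hA2 hc
      _ = (A * (Real.cosh a * Real.sinh b))^2 := by ring
  have hRHS0 : 0 ≤ A * (Real.cosh a * Real.sinh b) := by positivity
  have hmain : b * Real.sinh A ≤ A * (Real.cosh a * Real.sinh b) := by
    have h0 : 0 ≤ b * Real.sinh A := mul_nonneg hb0 hsA0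
    exact (pow_le_pow_iff_left₀ h0 hRHS0 (by norm_num)).mp hsq
  constructor
  · rw [← hsA, ← hsb, ← hka]; linarith [hmain]
  · intro hk1
    have ha_pos : 0 < a := by
      by_contra hcon
      push_neg at hcon
      have ha00 : a = 0 := le_antisymm hcon ha0
      rw [ha00, Real.cosh_zero] at hka
      linarith
    have hsa_lt : Real.sinh a < a * Real.cosh a := aux_sinh_lt_mul_cosh ha_pos
    have hmain' : b * Real.sinh A < A * (Real.cosh a * Real.sinh b) := by
      have hsq' : (b * Real.sinh A)^2 < (A * (Real.cosh a * Real.sinh b))^2 := by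
        have key : (b * Real.sinh a)^2 < a^2 * (Real.cosh a ^2 * Real.sinh b ^2) := by
          have h1 : b * Real.sinh a < a * Real.cosh a * Real.sinh b := by
            calc b * Real.sinh a ≤ Real.sinh b * Real.sinh a := by nlinarith
              _ < a * Real.cosh a * Real.sinh b := by nlinarith
          calc (b * Real.sinh a)^2 < (a * Real.cosh a * Real.sinh b)^2 := by
                have h0 : 0 ≤ b * Real.sinh a := mul_nonneg hb0 hsa0
                exact pow_lt_pow_left₀ h1 h0 two_ne_zero
            _ = a^2 * (Real.cosh a ^2 * Real.sinh b ^2) := by ring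
        calc (b * Real.sinh A)^2 = b^2 * (Real.cosh a ^2 * Real.sinh b ^2) + (b * Real.sinh a)^2 := by
              rw [mul_pow, hsA2]; ring
          _ < b^2 * (Real.cosh a ^2 * Real.sinh b ^2) + a^2 * (Real.cosh a ^2 * Real.sinh b ^2) := by
              linarith
          _ = (a^2 + b^2) * (Real.cosh a ^2 * Real.sinh b ^2) := by ring
          _ ≤ A^2 * (Real.cosh a ^2 * Real.sinh b ^2) := mul_le_mul_of_nonneg_right hA2 hc
          _ = (A * (Real.cosh a * Real.sinh b))^2 := by ring
      have h0 : 0 ≤ b * Real.sinh A := mul_nonneg hb0 hsA0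
      nlinarith [hsq', h0, hRHS0]
    rw [← hsA, ← hsb, ← hka]; linarith [hmain']

lemma aux_hasDerivAt_g {k y : ℝ} (hk : 1 ≤ k) (hy : 1 < y) :
    HasDerivAt (fun y : ℝ => arcosh (k*y)^2 - arcosh y^2)
      (2 * arcosh (k*y) * (1 / Real.sqrt ((k*y)^2 - 1) * k) - 2 * arcosh y * (1 / Real.sqrt (y^2 - 1))) y := by
  have hky : 1 < k * y := by nlinarith
  have h1 : HasDerivAt (fun y : ℝ => arcosh (k*y)) (1 / Real.sqrt ((k*y)^2 - 1) * k) y := by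
    have hin : HasDerivAt (fun y : ℝ => k * y) k y := by
      simpa using (hasDerivAt_id y).const_mul k
    exact (aux_hasDerivAt_arcosh hky).comp y hin
  have h2 := aux_hasDerivAt_arcosh hy
  have h1' := h1.pow 2
  have h2' := h2.pow 2
  have := h1'.sub h2'
  exact this.congr_deriv (by norm_num)

lemma aux_g_mono {k : ℝ} (hk : 1 ≤ k) :
    MonotoneOn (fun y : ℝ => arcosh (k*y)^2 - arcosh y^2) (Set.Ici 1) := by
  have hcont : ContinuousOn (fun y : ℝ => arcosh (k*y)^2 - arcosh y^2) (Set.Ici 1) := by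
    apply ContinuousOn.sub
    · apply ContinuousOn.pow
      apply aux_continuousOn_arcosh.comp (continuous_const.mul continuous_id).continuousOn
      intro y hy
      simp only [Set.mem_Ici] at *
      have h11 : (1:ℝ)*1 ≤ k*y := mul_le_mul hk hy zero_le_one (zero_le_one.trans hk)
      simpa using h11
    · exact (aux_continuousOn_arcosh.pow 2)
  apply monotoneOn_of_deriv_nonneg (convex_Ici 1) hcont
  · intro y hy
    rw [interior_Ici] at hy
    exact (aux_hasDerivAt_g hk hy).differentiableAt.differentiableWithinAt
  · intro y hy
    rw [interior_Ici] at hy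
    have hy1 : 1 < y := hy
    rw [(aux_hasDerivAt_g hk hy).deriv]
    have hky : 1 < k * y := by nlinarith [hy1, hk]
    have hP : 0 < Real.sqrt ((k*y)^2 - 1) := Real.sqrt_pos.mpr (by nlinarith [hky])
    have hQ : 0 < Real.sqrt (y^2 - 1) := Real.sqrt_pos.mpr (by nlinarith [hy1])
    have hkey := (aux_key hk hy).1
    have h3 : arcosh y / Real.sqrt (y^2-1) ≤ arcosh (k*y) * k / Real.sqrt ((k*y)^2-1) := by
      rw [div_le_div_iff₀ hQ hP]
      nlinarith [hkey]
    have e : 2 * arcosh (k*y) * (1 / Real.sqrt ((k*y)^2 - 1) * k) - 2 * arcosh y * (1 / Real.sqrt (y^2 - 1))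
        = 2 * (arcosh (k*y) * k / Real.sqrt ((k*y)^2-1) - arcosh y / Real.sqrt (y^2-1)) := by
      ring
    rw [e]
    linarith

lemma aux_g_strictMono {k : ℝ} (hk : 1 < k) :
    StrictMonoOn (fun y : ℝ => arcosh (k*y)^2 - arcosh y^2) (Set.Ici 1) := by
  have hcont : ContinuousOn (fun y : ℝ => arcosh (k*y)^2 - arcosh y^2) (Set.Ici 1) := by
    apply ContinuousOn.sub
    · apply ContinuousOn.pow
      apply aux_continuousOn_arcosh.comp (continuous_const.mul continuous_id).continuousOn
      intro y hy
      simp only [Set.mem_Ici] at *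
      have h11 : (1:ℝ)*1 ≤ k*y := mul_le_mul hk.le hy zero_le_one (zero_le_one.trans hk.le)
      simpa using h11
    · exact (aux_continuousOn_arcosh.pow 2)
  apply strictMonoOn_of_deriv_pos (convex_Ici 1) hcont
  intro y hy
  rw [interior_Ici] at hy
  have hy1 : 1 < y := hy
  rw [(aux_hasDerivAt_g hk.le hy).deriv]
  have hky : 1 < k * y := by nlinarith [hy1, hk]
  have hP : 0 < Real.sqrt ((k*y)^2 - 1) := Real.sqrt_pos.mpr (by nlinarith [hky])
  have hQ : 0 < Real.sqrt (y^2 - 1) := Real.sqrt_pos.mpr (by nlinarith [hy1])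
  have hkey := (aux_key hk.le hy).2 hk
  have h3 : arcosh y / Real.sqrt (y^2-1) < arcosh (k*y) * k / Real.sqrt ((k*y)^2-1) := by
    rw [div_lt_div_iff₀ hQ hP]
    nlinarith [hkey]
  have e : 2 * arcosh (k*y) * (1 / Real.sqrt ((k*y)^2 - 1) * k) - 2 * arcosh y * (1 / Real.sqrt (y^2 - 1))
      = 2 * (arcosh (k*y) * k / Real.sqrt ((k*y)^2-1) - arcosh y / Real.sqrt (y^2-1)) := by
    ring
  rw [e]
  linarith

theorem part2 (l d α : ℝ) (hl : 0 ≤ l) (hd : 0 ≤ d) (hα : 0 ≤ α) (hα2 : α ≤ Real.pi / 2) :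
      Real.cosh (Real.sqrt ((arcosh (Real.cosh l * Real.cosh (d * Real.cos α))) ^ 2
          + (d * Real.sin α) ^ 2)) ≤ Real.cosh l * Real.cosh d ∧
      (0 < Real.sin α → 0 < d → 0 < l →
        Real.cosh (Real.sqrt ((arcosh (Real.cosh l * Real.cosh (d * Real.cos α))) ^ 2
          + (d * Real.sin α) ^ 2)) < Real.cosh l * Real.cosh d) := by
  have hπ := Real.pi_pos
  have hcos0 : 0 ≤ Real.cos α := Real.cos_nonneg_of_mem_Icc ⟨by linarith, hα2⟩
  have hcos1 : Real.cos α ≤ 1 := Real.cos_le_one α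
  set c := d * Real.cos α with hcdef
  set s := d * Real.sin α with hsdef
  set k := Real.cosh l with hkdef
  clear_value c s k
  have hc0 : 0 ≤ c := by rw [hcdef]; exact mul_nonneg hd hcos0
  have hcd : c ≤ d := by rw [hcdef]; nlinarith
  have hk : 1 ≤ k := by rw [hkdef]; exact Real.one_le_cosh l
  have hC : 1 ≤ Real.cosh c := Real.one_le_cosh c
  have hD : 1 ≤ Real.cosh d := Real.one_le_cosh d
  have hCD : Real.cosh c ≤ Real.cosh d := by
    rw [Real.cosh_le_cosh, abs_of_nonneg hc0, abs_of_nonneg hd]; exact hcd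
  have hs2 : s^2 + c^2 = d^2 := by
    have h := Real.sin_sq_add_cos_sq α
    rw [hsdef, hcdef]
    nlinarith [h]
  have hkC : 1 ≤ k * Real.cosh c := by nlinarith
  have hkD : 1 ≤ k * Real.cosh d := by nlinarith
  have hu0 : 0 ≤ arcosh (k * Real.cosh c) := aux_arcosh_nonneg hkC
  have hL0 : 0 ≤ arcosh (k * Real.cosh d) := aux_arcosh_nonneg hkD
  have hcoshL : Real.cosh (arcosh (k * Real.cosh d)) = k * Real.cosh d := aux_cosh_arcosh hkD
  have hac : arcosh (Real.cosh c) = c := aux_arcosh_cosh hc0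
  have had : arcosh (Real.cosh d) = d := aux_arcosh_cosh hd
  constructor
  · have hmono := aux_g_mono hk (Set.mem_Ici.mpr hC) (Set.mem_Ici.mpr hD) hCD
    simp only [hac, had] at hmono
    have hsum : arcosh (k * Real.cosh c)^2 + s^2 ≤ arcosh (k * Real.cosh d)^2 := by linarith
    have hsqrt : Real.sqrt (arcosh (k * Real.cosh c)^2 + s^2) ≤ arcosh (k * Real.cosh d) := by
      rw [← Real.sqrt_sq hL0]
      exact Real.sqrt_le_sqrt hsum
    calc Real.cosh (Real.sqrt (arcosh (k * Real.cosh c)^2 + s^2))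
        ≤ Real.cosh (arcosh (k * Real.cosh d)) := by
          rw [Real.cosh_le_cosh, abs_of_nonneg (Real.sqrt_nonneg _), abs_of_nonneg hL0]
          exact hsqrt
      _ = k * Real.cosh d := hcoshL
  · intro hsin hd' hl'
    have hk1 : 1 < k := by
      rw [hkdef, show (1:ℝ) = Real.cosh 0 by simp, Real.cosh_lt_cosh]
      simpa [abs_of_nonneg hl] using hl'
    have hcoslt : Real.cos α < 1 := by
      rcases hcos1.lt_or_eq with h | h
      · exact h
      · exfalso
        have h2 := Real.sin_sq_add_cos_sq α
        rw [h] at h2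
        nlinarith
    have hclt : c < d := by rw [hcdef]; nlinarith [hd', hcoslt]
    have hCDlt : Real.cosh c < Real.cosh d := by
      rw [Real.cosh_lt_cosh, abs_of_nonneg hc0, abs_of_nonneg hd]; exact hclt
    have hmono := aux_g_strictMono hk1 (Set.mem_Ici.mpr hC) (Set.mem_Ici.mpr hD) hCDlt
    simp only [hac, had] at hmono
    have hsum : arcosh (k * Real.cosh c)^2 + s^2 < arcosh (k * Real.cosh d)^2 := by linarith
    have hsqrt : Real.sqrt (arcosh (k * Real.cosh c)^2 + s^2) < arcosh (k * Real.cosh d) := by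
      rw [← Real.sqrt_sq hL0]
      exact Real.sqrt_lt_sqrt (by positivity) hsum
    calc Real.cosh (Real.sqrt (arcosh (k * Real.cosh c)^2 + s^2))
        < Real.cosh (arcosh (k * Real.cosh d)) := by
          rw [Real.cosh_lt_cosh, abs_of_nonneg (Real.sqrt_nonneg _), abs_of_nonneg hL0]
          exact hsqrt
      _ = k * Real.cosh d := hcoshL

theorem product_distance_and_hypotenuse :
    (∀ (x y : ℍ) (a b : ℝ),
      dist ((WithLp.equiv 2 (ℍ × ℝ)).symm (x, a)) ((WithLp.equiv 2 (ℍ × ℝ)).symm (y, b))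
        = Real.sqrt (dist x y ^ 2 + (a - b) ^ 2)) ∧
    (∀ l d α : ℝ, 0 ≤ l → 0 ≤ d → 0 ≤ α → α ≤ Real.pi / 2 →
      Real.cosh (Real.sqrt ((arcosh (Real.cosh l * Real.cosh (d * Real.cos α))) ^ 2
          + (d * Real.sin α) ^ 2)) ≤ Real.cosh l * Real.cosh d ∧
      (0 < Real.sin α → 0 < d → 0 < l →
        Real.cosh (Real.sqrt ((arcosh (Real.cosh l * Real.cosh (d * Real.cos α))) ^ 2
          + (d * Real.sin α) ^ 2)) < Real.cosh l * Real.cosh d)) := by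
  constructor
  · intro x y a b
    rw [WithLp.prod_dist_eq_add (p := 2) (by norm_num)]
    have h1 : ((WithLp.equiv 2 (ℍ × ℝ)).symm (x, a)).fst = x := rfl
    have h2 : ((WithLp.equiv 2 (ℍ × ℝ)).symm (y, b)).fst = y := rfl
    have h3 : ((WithLp.equiv 2 (ℍ × ℝ)).symm (x, a)).snd = a := rfl
    have h4 : ((WithLp.equiv 2 (ℍ × ℝ)).symm (y, b)).snd = b := rfl
    rw [h1, h2, h3, h4]
    have : ((2:ENNReal).toReal) = (2:ℝ) := by norm_num
    rw [this, Real.dist_eq, Real.sqrt_eq_rpow]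
    rw [show |a - b| ^ (2:ℝ) = (a-b)^(2:ℕ) by rw [← Real.rpow_natCast]; norm_num [sq_abs]]
    rw [show dist x y ^ (2:ℝ) = dist x y ^(2:ℕ) by rw [← Real.rpow_natCast]; norm_num]
  · intro l d α hl hd hα hα2
    exact part2 l d α hl hd hα hα2
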